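/- Let H₁, …, Hₙ be finite-dimensional complex Hilbert spaces and H = H₁ ⊗ ⋯ ⊗ Hₙ. There exists a subspace V ⊆ H such that every nonzero v ∈ V is entangled and dim V = dim(H₁)⋯dim(Hₙ) − Σᵢ(dim Hᵢ − 1) − 1. -/
import Mathlib


open scoped TensorProduct
open Module

private lemma exists_fin_weight : ∀ {n : ℕ} (d : Fin n → ℕ), (∀ i, 0 < d i) → ∀ s : ℕ,
    s ≤ ∑ i, (d i - 1) → ∃ k : Π i, Fin (d i), ∑ i, ((k i : ℕ)) = s := by
  intro n
  induction n with
  | zero =>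
    intro d _ s hs
    simp only [Finset.univ_eq_empty, Finset.sum_empty, Nat.le_zero] at hs
    exact ⟨finZeroElim, by simp [hs]⟩
  | succ m ih =>
    intro d hd s hs
    rw [Fin.sum_univ_succ] at hs
    set a := min s (d 0 - 1) with ha
    obtain ⟨k', hk'⟩ := ih (fun i => d i.succ) (fun i => hd _) (s - a)
      (by show s - a ≤ ∑ i : Fin m, (d i.succ - 1); omega)
    refine ⟨Fin.cons ⟨a, by have := hd 0; omega⟩ k', ?_⟩
    rw [Fin.sum_univ_succ]
    simp only [Fin.cons_zero, Fin.cons_succ]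
    rw [hk']
    omega


/-- The bound of the entangled-subspace theorem is attained: for finite-dimensional
complex Hilbert spaces `H₁, …, Hₙ` (`n ≥ 1`) and `H = H₁ ⊗ ⋯ ⊗ Hₙ` there exists a
subspace `V ⊆ H`, every nonzero element of which is entangled (not a product tensor),
with `dim V = dim H₁ ⋯ dim Hₙ − ∑ᵢ (dim Hᵢ − 1) − 1`. -/
theorem unentangled_gleason_stmt4
    {n : ℕ} (hn : 0 < n)
    (H : Fin n → Type*) [∀ i, NormedAddCommGroup (H i)]
    [∀ i, InnerProductSpace ℂ (H i)] [∀ i, FiniteDimensional ℂ (H i)] :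
    ∃ V : Submodule ℂ (⨂[ℂ] i, H i),
      (∀ v ∈ V, v ≠ 0 → v ∉ Set.range (PiTensorProduct.tprod ℂ (s := H))) ∧
      Module.finrank ℂ V =
        (∏ i, Module.finrank ℂ (H i)) - (∑ i, (Module.finrank ℂ (H i) - 1)) - 1 := by
  classical
  set d : Fin n → ℕ := fun i => Module.finrank ℂ (H i) with hd
  by_cases hzero : ∃ i, d i = 0
  · obtain ⟨i, hi⟩ := hzero
    refine ⟨⊥, fun v hv hv0 _ => hv0 (by simpa using hv), ?_⟩
    have hprod : ∏ i, d i = 0 := Finset.prod_eq_zero (Finset.mem_univ i) hi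
    simp [hprod]
  push_neg at hzero
  have hpos : ∀ i, 0 < d i := fun i => Nat.pos_of_ne_zero (hzero i)
  set S : ℕ := ∑ i, (d i - 1) with hS
  let b : Π i, Basis (Fin (d i)) ℂ (H i) := fun i => Module.finBasis ℂ (H i)
  let κ := Π i, Fin (d i)
  let w : κ → ℕ := fun k => ∑ i, ((k i : ℕ))
  -- per-factor polynomial linear maps
  let P : Π i, H i →ₗ[ℂ] Polynomial ℂ := fun i =>
    (Finsupp.linearCombination ℂ (fun k : Fin (d i) => (Polynomial.X : Polynomial ℂ) ^ (k : ℕ)))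
      ∘ₗ (b i).repr.toLinearMap
  have hPexpand : ∀ i (y : H i), P i y = ∑ k, (b i).repr y k • (Polynomial.X : Polynomial ℂ) ^ (k : ℕ) := by
    intro i y
    simp [P, Finsupp.linearCombination_apply, Finsupp.sum_fintype]
  have hPb : ∀ i (j : Fin (d i)), P i ((b i) j) = (Polynomial.X : Polynomial ℂ) ^ (j : ℕ) := by
    intro i j
    simp [P]
  have hP0 : ∀ i (y : H i), P i y = 0 → y = 0 := by
    intro i y hy
    have hrep : ∀ j : Fin (d i), (b i).repr y j = 0 := by
      intro j
      have hc := congrArg (fun p => Polynomial.coeff p (j : ℕ)) hy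
      rw [hPexpand] at hc
      simpa [Polynomial.finset_sum_coeff, Polynomial.coeff_smul, Polynomial.coeff_X_pow,
        Fin.val_eq_val, smul_eq_mul, Finset.sum_ite_eq] using hc
    have : (b i).repr y = 0 := Finsupp.ext hrep
    exact ((b i).repr.map_eq_zero_iff).mp this
  -- the multilinear map and its lift
  let M : MultilinearMap ℂ H (Polynomial ℂ) :=
    (MultilinearMap.mkPiAlgebra ℂ (Fin n) (Polynomial ℂ)).compLinearMap P
  let Ψ : (⨂[ℂ] i, H i) →ₗ[ℂ] Polynomial ℂ := PiTensorProduct.lift M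
  have hΨ : ∀ x : Π i, H i, Ψ (PiTensorProduct.tprod ℂ x) = ∏ i, P i (x i) := by
    intro x
    simp [Ψ, M]
  -- basis-indexed product tensors
  let g : κ → ⨂[ℂ] i, H i := fun k => PiTensorProduct.tprod ℂ (fun i => b i (k i))
  let Θ : (κ → ℂ) →ₗ[ℂ] ⨂[ℂ] i, H i := (Pi.basisFun ℂ κ).constr ℂ g
  -- Θ is surjective
  have hspan : Submodule.span ℂ (Set.range g) = ⊤ := by
    rw [Submodule.eq_top_iff']
    intro v
    induction v using PiTensorProduct.induction_on with
    | smul_tprod r x =>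
      apply Submodule.smul_mem
      have hx : (PiTensorProduct.tprod ℂ) x
          = ∑ k : κ, (∏ i, (b i).repr (x i) (k i)) • g k := by
        calc (PiTensorProduct.tprod ℂ) x
            = (PiTensorProduct.tprod ℂ) (fun i => ∑ j, (b i).repr (x i) j • b i j) := by
              congr 1; funext i; exact ((b i).sum_repr (x i)).symm
          _ = ∑ k : κ, (PiTensorProduct.tprod ℂ)
                (fun i => (b i).repr (x i) (k i) • b i (k i)) :=
              MultilinearMap.map_sum _ _
          _ = ∑ k : κ, (∏ i, (b i).repr (x i) (k i)) • g k := by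
              refine Finset.sum_congr rfl fun k _ => ?_
              exact MultilinearMap.map_smul_univ _ _ _
      rw [hx]
      exact Submodule.sum_mem _ fun k _ =>
        Submodule.smul_mem _ _ (Submodule.subset_span ⟨k, rfl⟩)
    | add a c ha hc => exact Submodule.add_mem _ ha hc
  have hΘrange : LinearMap.range Θ = ⊤ := by
    rw [Basis.constr_range]; exact hspan
  have hΘsurj : Function.Surjective Θ := LinearMap.range_eq_top.mp hΘrange
  -- Θ is injective, via coordinate multilinear functionals
  let φ : κ → MultilinearMap ℂ H ℂ := fun k =>
    (MultilinearMap.mkPiAlgebra ℂ (Fin n) ℂ).compLinearMap (fun i => (b i).coord (k i))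
  let Ψf : (⨂[ℂ] i, H i) →ₗ[ℂ] (κ → ℂ) := LinearMap.pi (fun k => PiTensorProduct.lift (φ k))
  have hcomp : Ψf ∘ₗ Θ = LinearMap.id := by
    apply (Pi.basisFun ℂ κ).ext
    intro k
    simp only [LinearMap.comp_apply, LinearMap.id_apply, Θ, Basis.constr_basis]
    funext k'
    simp only [Ψf, LinearMap.pi_apply, g, PiTensorProduct.lift.tprod, φ,
      MultilinearMap.compLinearMap_apply, MultilinearMap.mkPiAlgebra_apply,
      Basis.coord_apply, Basis.repr_self, Pi.basisFun_apply]
    by_cases h : k' = k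
    · subst h; simp [Finsupp.single_apply]
    · obtain ⟨i, hi⟩ := Function.ne_iff.mp h
      rw [Finset.prod_eq_zero (Finset.mem_univ i)
        (show (Finsupp.single (k i) (1:ℂ)) (k' i) = 0 by
          rw [Finsupp.single_apply, if_neg (fun h' => hi h'.symm)])]
      simp [Pi.single_apply, h]
  have hΘinj : Function.Injective Θ := by
    intro u v huv
    have h1 := LinearMap.ext_iff.mp hcomp u
    have h2 := LinearMap.ext_iff.mp hcomp v
    simp only [LinearMap.comp_apply, LinearMap.id_apply] at h1 h2
    rw [← h1, ← h2, huv]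
  let ΘE : (κ → ℂ) ≃ₗ[ℂ] ⨂[ℂ] i, H i := LinearEquiv.ofBijective Θ ⟨hΘinj, hΘsurj⟩
  have : FiniteDimensional ℂ (⨂[ℂ] i, H i) := Module.Finite.equiv ΘE
  have hrk : finrank ℂ (⨂[ℂ] i, H i) = ∏ i, d i := by
    rw [← ΘE.finrank_eq, Module.finrank_fintype_fun_eq_card, Fintype.card_pi]
    simp
  -- range of Ψ
  have hΨΘ : Ψ ∘ₗ Θ = (Pi.basisFun ℂ κ).constr ℂ
      (fun k => (Polynomial.X : Polynomial ℂ) ^ (w k)) := by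
    apply (Pi.basisFun ℂ κ).ext
    intro k
    simp only [LinearMap.comp_apply, Θ, Basis.constr_basis]
    rw [show g k = PiTensorProduct.tprod ℂ (fun i => b i (k i)) from rfl, hΨ]
    simp only [hPb]
    exact Finset.prod_pow_eq_pow_sum _ _ _
  have hwle : ∀ k : κ, w k ≤ S := by
    intro k
    refine Finset.sum_le_sum fun i _ => ?_
    have := (k i).isLt
    omega
  have hrange : LinearMap.range Ψ
      = Submodule.span ℂ (Set.range fun s : Fin (S + 1) => (Polynomial.X : Polynomial ℂ) ^ (s : ℕ)) := by
    have h1 : LinearMap.range Ψ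
        = Submodule.span ℂ (Set.range fun k : κ => (Polynomial.X : Polynomial ℂ) ^ (w k)) := by
      rw [← LinearMap.range_comp_of_range_eq_top Ψ hΘrange, hΨΘ, Basis.constr_range]
    rw [h1]
    apply le_antisymm
    · rw [Submodule.span_le]
      rintro _ ⟨k, rfl⟩
      exact Submodule.subset_span ⟨⟨w k, by have := hwle k; omega⟩, rfl⟩
    · rw [Submodule.span_le]
      rintro _ ⟨s, rfl⟩
      obtain ⟨k, hk⟩ := exists_fin_weight d hpos (s : ℕ) (by have := s.isLt; omega)
      exact Submodule.subset_span ⟨k, by simp only [w, hk]⟩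
  have hXind : LinearIndependent ℂ (fun s : Fin (S + 1) => (Polynomial.X : Polynomial ℂ) ^ (s : ℕ)) := by
    have h := (Polynomial.basisMonomials ℂ).linearIndependent.comp
      (fun s : Fin (S + 1) => (s : ℕ)) Fin.val_injective
    convert h using 2 with s
    simp [Polynomial.X_pow_eq_monomial]
  have hfr : finrank ℂ (LinearMap.range Ψ) = S + 1 := by
    rw [hrange, finrank_span_eq_card hXind, Fintype.card_fin]
  have hrn := LinearMap.finrank_range_add_finrank_ker Ψ
  rw [hfr, hrk] at hrn
  refine ⟨LinearMap.ker Ψ, ?_, ?_⟩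
  · intro v hv hv0 hmem
    obtain ⟨x, rfl⟩ := hmem
    have h1 : ∏ i, P i (x i) = 0 := by
      rw [← hΨ]; exact LinearMap.mem_ker.mp hv
    obtain ⟨i, -, hi⟩ := Finset.prod_eq_zero_iff.mp h1
    exact hv0 (MultilinearMap.map_coord_zero _ i (hP0 i _ hi))
  · have hrn' : S + 1 + finrank ℂ (LinearMap.ker Ψ) = Finset.univ.prod d := hrn
    omega
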